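/- Let G be a δ-degenerate graph on n vertices. Then there is a partition S_1, …, S_k of V(G) with k ≤ δ·log₂ n (for n ≥ 2) such that each S_i is a stable (independent) set, and for every i and every v ∈ S_i, the degree of v in G[V(G) \ (S_1 ∪ ⋯ ∪ S_{i−1})] is at most 4δ. -/

import Mathlib

universe u v

variable {V : Type u}

/-- The open neighborhood of a set `D`: vertices outside `D` with a neighbor in `D`. -/
def nbhd (G : SimpleGraph V) (D : Set V) : Set V :=
  {w | w ∉ D ∧ ∃ u ∈ D, G.Adj u w}

/-- `u` and `w` are joined by a walk all of whose vertices lie in `S`. -/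
def ConnectedIn (G : SimpleGraph V) (S : Set V) (u w : V) : Prop :=
  ∃ p : G.Walk u w, ∀ x ∈ p.support, x ∈ S

/-- `D` is a connected component of the subgraph of `G` induced on `S`. -/
def IsCompOf (G : SimpleGraph V) (S : Set V) (D : Set V) : Prop :=
  D.Nonempty ∧ D ⊆ S ∧ (∀ u ∈ D, ∀ w ∈ D, ConnectedIn G D u w) ∧
    ∀ u ∈ D, ∀ w ∈ S, G.Adj u w → w ∈ D

/-- `X` is a minimal separator: some `u, w` outside `X` are separated by `X`
but by no proper subset of `X`. -/
def IsMinimalSeparator (G : SimpleGraph V) (X : Set V) : Prop :=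
  ∃ u w : V, u ∉ X ∧ w ∉ X ∧ ¬ ConnectedIn G Xᶜ u w ∧
    ∀ Y : Set V, Y ⊂ X → ConnectedIn G Yᶜ u w

/-- A tree decomposition of the subgraph of `G` induced on `W`. -/
structure IsTreeDecompOn {T : Type v} (G : SimpleGraph V) (W : Set V)
    (tree : SimpleGraph T) (χ : T → Set V) : Prop where
  isTree : tree.IsTree
  bags_subset : ∀ t, χ t ⊆ W
  mem_bag : ∀ x ∈ W, ∃ t, x ∈ χ t
  edge_bag : ∀ x ∈ W, ∀ y ∈ W, G.Adj x y → ∃ t, x ∈ χ t ∧ y ∈ χ t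
  trace_connected : ∀ x : V, ∀ t₁, x ∈ χ t₁ → ∀ t₂, x ∈ χ t₂ →
    ConnectedIn tree {t | x ∈ χ t} t₁ t₂

/-- A tree decomposition of `G`. -/
def IsTreeDecomp {T : Type v} (G : SimpleGraph V)
    (tree : SimpleGraph T) (χ : T → Set V) : Prop :=
  IsTreeDecompOn G Set.univ tree χ

/-- The treewidth of `G`: the least `w` such that `G` has a tree decomposition
all of whose bags have at most `w + 1` vertices. -/
noncomputable def treewidth (G : SimpleGraph V) : ℕ :=
  sInf {w | ∃ (n : ℕ) (tree : SimpleGraph (Fin n)) (χ : Fin n → Set V),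
    IsTreeDecomp G tree χ ∧ ∀ t, (χ t).ncard ≤ w + 1}

/-- `G` is chordal: it has no induced cycle of length at least 4. -/
def IsChordal (G : SimpleGraph V) : Prop :=
  ∀ n : ℕ, 4 ≤ n → ¬ ∃ f : Fin n → V, Function.Injective f ∧
    ∀ i j : Fin n, G.Adj (f i) (f j) ↔
      ((i.val + 1) % n = j.val ∨ (j.val + 1) % n = i.val)

/-- `H` is a minimal chordal completion (fill-in) of `G`. -/
def IsMinimalChordalCompletion (G H : SimpleGraph V) : Prop :=
  G ≤ H ∧ IsChordal H ∧
    ∀ H' : SimpleGraph V, G ≤ H' → H' ≤ H → IsChordal H' → H' = H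

/-- `Ω` is a potential maximal clique of `G`: a maximal clique of some minimal
chordal completion of `G`. -/
def IsPMC (G : SimpleGraph V) (Ω : Set V) : Prop :=
  ∃ H : SimpleGraph V, IsMinimalChordalCompletion G H ∧
    H.IsClique Ω ∧ ∀ Ω' : Set V, H.IsClique Ω' → Ω ⊆ Ω' → Ω' = Ω

/-- The clique number `ω(G)`. -/
noncomputable def cliqueNumber (G : SimpleGraph V) : ℕ :=
  sSup {n | ∃ s : Finset V, G.IsNClique n s}

/-- A stable (independent) set of vertices. -/
def StableSet (G : SimpleGraph V) (S : Set V) : Prop :=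
  ∀ u ∈ S, ∀ w ∈ S, ¬ G.Adj u w

/-- The Ramsey number `R(t, s)`: the least `n` such that every graph on `n`
vertices contains a clique of size `t` or a stable set of size `s`. -/
noncomputable def ramseyNum (t s : ℕ) : ℕ :=
  sInf {n | ∀ G : SimpleGraph (Fin n),
    (∃ K : Finset (Fin n), G.IsNClique t K) ∨
    (∃ S : Finset (Fin n), S.card = s ∧ StableSet G ↑S)}

/-- `G` is `d`-degenerate: every induced subgraph has a vertex of degree less
than `d` (within that subgraph). -/
def DegenerateLE (G : SimpleGraph V) (d : ℕ) : Prop :=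
  ∀ W : Set V, W.Nonempty → ∃ x ∈ W, (W ∩ G.neighborSet x).ncard < d

/-- `D` is the big component for `x`: a component of `G \ N[x]` with more than
half of all vertices. -/
def IsBigComp (G : SimpleGraph V) (x : V) (D : Set V) : Prop :=
  IsCompOf G ((insert x (G.neighborSet x))ᶜ) D ∧ Nat.card V < 2 * D.ncard

/-- The `C`-side of the canonical star separation: `C(x) = {x} ∪ N(B(x))`. -/
def Cside (G : SimpleGraph V) (B : V → Set V) (x : V) : Set V :=
  insert x (nbhd G (B x))

/-- The `A`-side of the canonical star separation. -/
def Aside (G : SimpleGraph V) (B : V → Set V) (x : V) : Set V :=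
  (B x ∪ Cside G B x)ᶜ

/-- Star twins. -/
def StarTwins (G : SimpleGraph V) (B : V → Set V) (x y : V) : Prop :=
  B x = B y ∧ Cside G B x \ {x} = Cside G B y \ {y} ∧
    Aside G B x ∪ {x} = Aside G B y ∪ {y}

/-- The relation `≤_A` (partial order by `A`-sides, ties among star twins
broken by the total order `O`). -/
def leA (G : SimpleGraph V) (B : V → Set V) (O : V → ℕ) (x y : V) : Prop :=
  x = y ∨ (StarTwins G B x y ∧ O x < O y) ∨
    (¬ StarTwins G B x y ∧ y ∈ Aside G B x)

/-- `Core(S)`: the `≤_A`-minimal elements of `S`. -/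
def CoreS (G : SimpleGraph V) (S : Set V) (B : V → Set V) (O : V → ℕ) : Set V :=
  {x ∈ S | ∀ u ∈ S, leA G B O u x → u = x}

/-- The central bag `β(S)`. -/
def centralBag (G : SimpleGraph V) (S : Set V) (B : V → Set V) (O : V → ℕ) :
    Set V :=
  ⋂ x ∈ CoreS G S B O, (B x ∪ Cside G B x)

/-- `G` has a clique cutset. -/
def HasCliqueCutset (G : SimpleGraph V) : Prop :=
  ∃ K : Set V, G.IsClique K ∧ ∃ u w, u ∉ K ∧ w ∉ K ∧ ¬ ConnectedIn G Kᶜ u w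

/-- A chordless (induced) path, as a walk. -/
def IsInducedPathW (G : SimpleGraph V) {a b : V} (P : G.Walk a b) : Prop :=
  P.IsPath ∧ ∀ i j : ℕ, i + 2 ≤ j → j ≤ P.length →
    ¬ G.Adj (P.getVert i) (P.getVert j)

/-- Two `a`–`b` walks have disjoint and anticomplete interiors. -/
def IntDisjAnticomplete (G : SimpleGraph V) {a b : V} (P Q : G.Walk a b) : Prop :=
  ∀ u ∈ P.support, ∀ w ∈ Q.support, u ≠ a → u ≠ b → w ≠ a → w ≠ b →
    u ≠ w ∧ ¬ G.Adj u w

/-- `G` contains a theta (as an induced subgraph). -/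
def HasTheta (G : SimpleGraph V) : Prop :=
  ∃ (a b : V) (P₁ P₂ P₃ : G.Walk a b),
    ¬ G.Adj a b ∧
    IsInducedPathW G P₁ ∧ 2 ≤ P₁.length ∧
    IsInducedPathW G P₂ ∧ 2 ≤ P₂.length ∧
    IsInducedPathW G P₃ ∧ 2 ≤ P₃.length ∧
    IntDisjAnticomplete G P₁ P₂ ∧
    IntDisjAnticomplete G P₁ P₃ ∧
    IntDisjAnticomplete G P₂ P₃


section helpers
variable [Finite V] {G : SimpleGraph V} {d : ℕ}

lemma degSum (h : DegenerateLE G d) :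
    ∀ (n : ℕ) (W : Set V), W.ncard ≤ n →
      ∑ x ∈ W.toFinite.toFinset, ((W ∩ G.neighborSet x).ncard + 2) ≤ 2 * d * W.ncard := by
  intro n
  induction n with
  | zero =>
    intro W hW
    have : W = ∅ := by
      rw [← Set.ncard_eq_zero W.toFinite]; omega
    subst this
    simp
  | succ n ih =>
    intro W hW
    rcases W.eq_empty_or_nonempty with rfl | hne
    · simp
    classical
    obtain ⟨x0, hx0, hdeg⟩ := h W hne
    set W₂ := W \ {x0} with hW₂def
    have hx0notin : x0 ∉ W₂ := by simp [hW₂def]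
    have hWpos : 1 ≤ W.ncard := (Set.ncard_pos W.toFinite).mpr hne
    have hcard₂ : W₂.ncard = W.ncard - 1 := Set.ncard_diff_singleton_of_mem hx0
    have hsub : W₂ ⊆ W := Set.diff_subset
    -- finset decomposition
    have hfin : W.toFinite.toFinset = insert x0 W₂.toFinite.toFinset := by
      ext y
      simp only [Set.Finite.mem_toFinset, Finset.mem_insert, hW₂def, Set.mem_diff,
        Set.mem_singleton_iff]
      constructor
      · intro hy; by_cases hyx : y = x0 <;> tauto
      · rintro (rfl | ⟨hy, _⟩) <;> assumption
    have hx0fin : x0 ∉ W₂.toFinite.toFinset := by simpa using hx0notin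
    rw [hfin, Finset.sum_insert hx0fin]
    -- rewrite summands over W₂
    have hsummand : ∀ x ∈ W₂, (W ∩ G.neighborSet x).ncard
        = (W₂ ∩ G.neighborSet x).ncard + (if G.Adj x0 x then 1 else 0) := by
      intro x hx
      by_cases hadj : G.Adj x0 x
      · have : W ∩ G.neighborSet x = insert x0 (W₂ ∩ G.neighborSet x) := by
          ext y
          simp only [Set.mem_inter_iff, Set.mem_insert_iff, hW₂def, Set.mem_diff,
            Set.mem_singleton_iff, SimpleGraph.mem_neighborSet]
          constructor
          · intro ⟨hyW, hyadj⟩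
            by_cases hyx : y = x0
            · left; exact hyx
            · right; exact ⟨⟨hyW, hyx⟩, hyadj⟩
          · rintro (rfl | ⟨⟨hyW, _⟩, hyadj⟩)
            · exact ⟨hx0, hadj.symm⟩
            · exact ⟨hyW, hyadj⟩
        rw [this, Set.ncard_insert_of_notMem (by simp [hx0notin]) (W₂ ∩ _).toFinite, if_pos hadj]
      · have : W ∩ G.neighborSet x = W₂ ∩ G.neighborSet x := by
          ext y
          simp only [Set.mem_inter_iff, hW₂def, Set.mem_diff, Set.mem_singleton_iff,
            SimpleGraph.mem_neighborSet]
          constructor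
          · intro ⟨hyW, hyadj⟩
            refine ⟨⟨hyW, ?_⟩, hyadj⟩
            rintro rfl; exact hadj hyadj.symm
          · tauto
        rw [this, if_neg hadj, Nat.add_zero]
    have hsum2 : ∑ x ∈ W₂.toFinite.toFinset, ((W ∩ G.neighborSet x).ncard + 2)
        = ∑ x ∈ W₂.toFinite.toFinset, ((W₂ ∩ G.neighborSet x).ncard + 2)
          + ∑ x ∈ W₂.toFinite.toFinset, (if G.Adj x0 x then 1 else 0) := by
      rw [← Finset.sum_add_distrib]
      apply Finset.sum_congr rfl
      intro x hx
      have := hsummand x (by simpa using hx)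
      omega
    have hindsum : ∑ x ∈ W₂.toFinite.toFinset, (if G.Adj x0 x then 1 else 0)
        = (W₂ ∩ G.neighborSet x0).ncard := by
      rw [← Finset.card_filter]
      have : W₂ ∩ G.neighborSet x0 = ↑(W₂.toFinite.toFinset.filter (fun x => G.Adj x0 x)) := by
        ext y
        simp [Set.Finite.mem_toFinset, SimpleGraph.mem_neighborSet, SimpleGraph.adj_comm]
      rw [this, Set.ncard_coe_finset]
    have hIH := ih W₂ (by omega)
    have h1 : (W₂ ∩ G.neighborSet x0).ncard ≤ (W ∩ G.neighborSet x0).ncard :=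
      Set.ncard_le_ncard (Set.inter_subset_inter_left _ hsub) (W ∩ _).toFinite
    rw [hsum2, hindsum]
    have : 2 * d * W₂.ncard + 2 * d ≤ 2 * d * W.ncard := by
      rw [hcard₂]
      have : W.ncard - 1 + 1 = W.ncard := by omega
      nlinarith [this]
    omega
end helpers

section helpers2
variable [Finite V] {G : SimpleGraph V} {d : ℕ}

lemma roundL (h : DegenerateLE G d) (W : Set V) :
    W \ {x ∈ W | (W ∩ G.neighborSet x).ncard ≤ 4*d} = ∅ ∨
      2 * (W \ {x ∈ W | (W ∩ G.neighborSet x).ncard ≤ 4*d}).ncard + 2 ≤ W.ncard := by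
  classical
  set L := {x ∈ W | (W ∩ G.neighborSet x).ncard ≤ 4*d} with hLdef
  by_cases hsmall : W.ncard ≤ 4*d + 1
  · left
    ext x
    simp only [Set.mem_diff, Set.mem_empty_iff_false, iff_false, not_and, hLdef,
      Set.mem_setOf_eq, not_not]
    intro hxW
    have hsubx : W ∩ G.neighborSet x ⊆ W \ {x} := by
      rintro y ⟨hyW, hyN⟩
      exact ⟨hyW, by rintro rfl; exact G.irrefl hyN⟩
    have := Set.ncard_le_ncard hsubx (W \ {x}).toFinite
    rw [Set.ncard_diff_singleton_of_mem hxW] at this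
    intro hcon; exact hcon hxW (by omega)
  · right
    push_neg at hsmall
    have hsub : (W \ L).toFinite.toFinset ⊆ W.toFinite.toFinset := by
      intro x hx
      simp only [Set.Finite.mem_toFinset] at hx ⊢
      exact hx.1
    have hlow : ∀ x ∈ (W \ L).toFinite.toFinset,
        4*d + 3 ≤ (W ∩ G.neighborSet x).ncard + 2 := by
      intro x hx
      simp only [Set.Finite.mem_toFinset, Set.mem_diff, hLdef, Set.mem_setOf_eq] at hx
      have : ¬ (W ∩ G.neighborSet x).ncard ≤ 4*d := fun hle => hx.2 ⟨hx.1, hle⟩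
      omega
    have h1 : (W \ L).toFinite.toFinset.card * (4*d+3)
        ≤ ∑ x ∈ (W \ L).toFinite.toFinset, ((W ∩ G.neighborSet x).ncard + 2) := by
      calc (W \ L).toFinite.toFinset.card * (4*d+3)
          = ∑ _x ∈ (W \ L).toFinite.toFinset, (4*d+3) := by rw [Finset.sum_const, smul_eq_mul]
        _ ≤ _ := Finset.sum_le_sum hlow
    have h2 : ∑ x ∈ (W \ L).toFinite.toFinset, ((W ∩ G.neighborSet x).ncard + 2)
        ≤ ∑ x ∈ W.toFinite.toFinset, ((W ∩ G.neighborSet x).ncard + 2) :=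
      Finset.sum_le_sum_of_subset hsub
    have h3 := degSum h W.ncard W le_rfl
    have hcardeq : (W \ L).toFinite.toFinset.card = (W \ L).ncard :=
      (Set.ncard_eq_toFinset_card _ (W \ L).toFinite).symm
    -- combine: (4d+3) * c ≤ 2d * m, m ≥ 4d+2  ⇒ 2c + 2 ≤ m
    set c := (W \ L).ncard
    set m := W.ncard
    rw [hcardeq] at h1
    have hkey : c * (4*d+3) ≤ 2*d*m := le_trans h1 (le_trans h2 h3)
    nlinarith [hkey, hsmall]
end helpers2

section helpers3
variable [Finite V] {G : SimpleGraph V} {d : ℕ}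

lemma colorize (h : DegenerateLE G d) :
    ∀ (n : ℕ) (L : Set V), L.ncard ≤ n →
      ∃ f : ℕ → Set V, (∀ i, d ≤ i → f i = ∅) ∧
        (∀ i j, i ≠ j → Disjoint (f i) (f j)) ∧
        (⋃ i, f i) = L ∧ (∀ i, StableSet G (f i)) := by
  intro n
  induction n with
  | zero =>
    intro L hL
    have : L = ∅ := by rw [← Set.ncard_eq_zero L.toFinite]; omega
    subst this
    exact ⟨fun _ => ∅, fun _ _ => rfl, fun _ _ _ => disjoint_bot_left, by simp,
      fun _ u hu => absurd hu (Set.notMem_empty u)⟩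
  | succ n ih =>
    intro L hL
    rcases L.eq_empty_or_nonempty with rfl | hne
    · exact ⟨fun _ => ∅, fun _ _ => rfl, fun _ _ _ => disjoint_bot_left, by simp,
        fun _ u hu => absurd hu (Set.notMem_empty u)⟩
    obtain ⟨x0, hx0, hdeg⟩ := h L hne
    set L₂ := L \ {x0} with hL2def
    have hcard₂ : L₂.ncard = L.ncard - 1 := Set.ncard_diff_singleton_of_mem hx0
    have hLpos : 1 ≤ L.ncard := (Set.ncard_pos L.toFinite).mpr hne
    obtain ⟨f, hf0, hfd, hfU, hfs⟩ := ih L₂ (by omega)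
    have hfsub : ∀ i, f i ⊆ L₂ := fun i => hfU ▸ Set.subset_iUnion f i
    -- find a color avoiding the neighborhood of x0
    have hfree : ∃ i0, i0 < d ∧ ∀ y ∈ f i0, ¬ G.Adj x0 y := by
      by_contra hc
      push_neg at hc
      choose y hy hyadj using hc
      have hmem : ∀ i : Fin d, y i.1 i.2 ∈ L ∩ G.neighborSet x0 :=
        fun i => ⟨(hfsub i.1 (hy i.1 i.2)).1, hyadj i.1 i.2⟩
      have hginj : Function.Injective
          (fun i : Fin d => (⟨y i.1 i.2, hmem i⟩ : ↥(L ∩ G.neighborSet x0))) := by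
        intro i j hij
        have hval : y i.1 i.2 = y j.1 j.2 := congrArg Subtype.val hij
        by_contra hne'
        have hd := hfd i.1 j.1 (fun hv => hne' (Fin.ext hv))
        exact (hd.ne_of_mem (hy i.1 i.2) (hval ▸ hy j.1 j.2)) rfl
      have hdle := Nat.card_le_card_of_injective _ hginj
      rw [Nat.card_coe_set_eq, Nat.card_eq_fintype_card, Fintype.card_fin] at hdle
      omega
    obtain ⟨i0, hi0d, hi0⟩ := hfree
    refine ⟨fun i => if i = i0 then insert x0 (f i0) else f i, ?_, ?_, ?_, ?_⟩
    · intro i hi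
      beta_reduce
      rw [if_neg (by omega)]
      exact hf0 i hi
    · intro i j hij
      beta_reduce
      have hx0f : ∀ k, x0 ∉ f k := fun k hk => (hfsub k hk).2 rfl
      by_cases hii : i = i0 <;> by_cases hjj : j = i0
      · omega
      · subst hii
        rw [if_pos rfl, if_neg hjj]
        refine Set.disjoint_left.mpr ?_
        rintro a ha haj
        rcases Set.mem_insert_iff.mp ha with rfl | ha'
        · exact hx0f j haj
        · exact (hfd i j (Ne.symm hjj)).ne_of_mem ha' haj rfl
      · subst hjj
        rw [if_pos rfl, if_neg hii]
        refine (Set.disjoint_left.mpr ?_).symm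
        rintro a ha haj
        rcases Set.mem_insert_iff.mp ha with rfl | ha'
        · exact hx0f i haj
        · exact (hfd j i (Ne.symm hii)).ne_of_mem ha' haj rfl
      · rw [if_neg hii, if_neg hjj]; exact hfd i j hij
    · ext u
      simp only [Set.mem_iUnion]
      constructor
      · rintro ⟨i, hi⟩
        by_cases hii : i = i0
        · rw [hii, if_pos rfl] at hi
          rcases hi with rfl | hi
          · exact hx0
          · exact (hfsub i0 hi).1
        · rw [if_neg hii] at hi
          exact (hfsub i hi).1
      · intro hu
        by_cases hux : u = x0
        · exact ⟨i0, by rw [if_pos rfl]; exact Set.mem_insert_iff.mpr (Or.inl hux)⟩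
        · have : u ∈ L₂ := ⟨hu, hux⟩
          rw [← hfU] at this
          obtain ⟨i, hi⟩ := Set.mem_iUnion.mp this
          by_cases hii : i = i0
          · exact ⟨i0, by rw [if_pos rfl]; exact Set.mem_insert_iff.mpr (Or.inr (hii ▸ hi))⟩
          · exact ⟨i, by rw [if_neg hii]; exact hi⟩
    · intro i
      beta_reduce
      by_cases hii : i = i0
      · rw [hii, if_pos rfl]
        intro u hu w hw hadj
        rcases hu with rfl | hu <;> rcases hw with rfl | hw
        · exact G.irrefl hadj
        · exact hi0 w hw hadj
        · exact hi0 u hu hadj.symm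
        · exact hfs i0 u hu w hw hadj
      · rw [if_neg hii]; exact hfs i
end helpers3

def Props (G : SimpleGraph V) (d : ℕ) (S : ℕ → Set V) (W : Set V) (c : ℕ) : Prop :=
  (∀ i, c ≤ i → S i = ∅) ∧ (∀ i j, i ≠ j → Disjoint (S i) (S j)) ∧
  (⋃ i, S i) = W ∧ (∀ i, StableSet G (S i)) ∧
  ∀ i, ∀ x ∈ S i, ({u | ∃ j, i ≤ j ∧ u ∈ S j} ∩ G.neighborSet x).ncard ≤ 4 * d

section helpers4
variable [Finite V] {G : SimpleGraph V} {d : ℕ}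

lemma combine {W L : Set V} (hLW : L ⊆ W)
    (hdeg : ∀ x ∈ L, (W ∩ G.neighborSet x).ncard ≤ 4*d)
    {f : ℕ → Set V} (hf0 : ∀ i, d ≤ i → f i = ∅)
    (hfd : ∀ i j, i ≠ j → Disjoint (f i) (f j))
    (hfU : (⋃ i, f i) = L) (hfs : ∀ i, StableSet G (f i))
    {S' : ℕ → Set V} {c : ℕ} (hS' : Props G d S' (W \ L) c) :
    Props G d (fun i => if i < d then f i else S' (i - d)) W (d + c) := by
  obtain ⟨hS0, hSd, hSU, hSs, hSdeg⟩ := hS'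
  have hfsub : ∀ i, f i ⊆ L := fun i => hfU ▸ Set.subset_iUnion f i
  have hSsub : ∀ i, S' i ⊆ W \ L := fun i => hSU ▸ Set.subset_iUnion S' i
  set S : ℕ → Set V := fun i => if i < d then f i else S' (i - d) with hSdef
  have hSW : ∀ i, S i ⊆ W := by
    intro i
    simp only [hSdef]
    split
    · exact (hfsub i).trans hLW
    · exact (hSsub (i - d)).trans Set.diff_subset
  refine ⟨?_, ?_, ?_, ?_, ?_⟩
  · intro i hi
    simp only [hSdef]
    rw [if_neg (by omega)]
    exact hS0 (i - d) (by omega)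
  · intro i j hij
    simp only [hSdef]
    by_cases hi : i < d <;> by_cases hj : j < d
    · rw [if_pos hi, if_pos hj]; exact hfd i j hij
    · rw [if_pos hi, if_neg hj]
      exact Set.disjoint_of_subset (hfsub i) (hSsub (j - d))
        (Set.disjoint_sdiff_right)
    · rw [if_neg hi, if_pos hj]
      exact Set.disjoint_of_subset (hSsub (i - d)) (hfsub j)
        (Set.disjoint_sdiff_left)
    · rw [if_neg hi, if_neg hj]
      exact hSd (i - d) (j - d) (by omega)
  · apply Set.eq_of_subset_of_subset
    · exact Set.iUnion_subset hSW
    · intro u hu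
      by_cases huL : u ∈ L
      · rw [← hfU] at huL
        obtain ⟨i, hi⟩ := Set.mem_iUnion.mp huL
        have hid : i < d := by
          by_contra hc
          rw [hf0 i (by omega)] at hi
          exact hi
        exact Set.mem_iUnion.mpr ⟨i, by simp only [hSdef]; rw [if_pos hid]; exact hi⟩
      · have : u ∈ W \ L := ⟨hu, huL⟩
        rw [← hSU] at this
        obtain ⟨j, hj⟩ := Set.mem_iUnion.mp this
        refine Set.mem_iUnion.mpr ⟨d + j, ?_⟩
        simp only [hSdef]
        rw [if_neg (by omega)]
        simpa using hj
  · intro i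
    simp only [hSdef]
    split
    · exact hfs _
    · exact hSs _
  · intro i x hx
    simp only [hSdef] at hx
    by_cases hi : i < d
    · rw [if_pos hi] at hx
      have hxL : x ∈ L := hfsub i hx
      have hsub2 : {u | ∃ j, i ≤ j ∧ u ∈ S j} ∩ G.neighborSet x
          ⊆ W ∩ G.neighborSet x := by
        rintro u ⟨⟨j, _, hj⟩, hN⟩
        exact ⟨hSW j hj, hN⟩
      exact le_trans (Set.ncard_le_ncard hsub2 (W ∩ _).toFinite) (hdeg x hxL)
    · rw [if_neg hi] at hx
      have hseteq : {u | ∃ j, i ≤ j ∧ u ∈ S j}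
          = {u | ∃ j, i - d ≤ j ∧ u ∈ S' j} := by
        ext u
        simp only [Set.mem_setOf_eq]
        constructor
        · rintro ⟨j, hij, hj⟩
          have hjd : ¬ j < d := by omega
          simp only [hSdef] at hj
          rw [if_neg hjd] at hj
          exact ⟨j - d, by omega, hj⟩
        · rintro ⟨j, hij, hj⟩
          refine ⟨d + j, by omega, ?_⟩
          simp only [hSdef]
          rw [if_neg (by omega)]
          simpa using hj
      rw [hseteq]
      exact hSdeg (i - d) x hx

lemma build (h : DegenerateLE G d) :
    ∀ (T : ℕ) (W : Set V), W.ncard + 2 ≤ 2 ^ (T + 1) →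
      ∃ S : ℕ → Set V, Props G d S W (d * T) := by
  intro T
  induction T with
  | zero =>
    intro W hW
    have : W = ∅ := by rw [← Set.ncard_eq_zero W.toFinite]; omega
    subst this
    refine ⟨fun _ => ∅, fun _ _ => rfl, fun _ _ _ => disjoint_bot_left, by simp,
      fun _ u hu => absurd hu (Set.notMem_empty u), ?_⟩
    intro i x hx
    exact absurd hx (Set.notMem_empty x)
  | succ T ih =>
    intro W hW
    set L := {x ∈ W | (W ∩ G.neighborSet x).ncard ≤ 4*d} with hLdef
    have hLW : L ⊆ W := fun x hx => hx.1
    have hW' : (W \ L).ncard + 2 ≤ 2 ^ (T + 1) := by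
      rcases roundL h W with hemp | hineq
      · rw [hemp, Set.ncard_empty]
        have : (0:ℕ) < 2 ^ (T+1) := by positivity
        have h2 : 2 ≤ 2 ^ (T+1) := Nat.one_lt_two_pow (by omega)
        omega
      · rw [← hLdef] at hineq
        have h2 : 2 ^ (T + 1 + 1) = 2 * 2 ^ (T + 1) := by ring
        omega
    obtain ⟨S', hS'⟩ := ih (W \ L) hW'
    obtain ⟨f, hf0, hfd, hfU, hfs⟩ := colorize h L.ncard L le_rfl
    have hdeg : ∀ x ∈ L, (W ∩ G.neighborSet x).ncard ≤ 4*d := fun x hx => hx.2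
    have := combine hLW hdeg hf0 hfd hfU hfs hS'
    have heq : d + d * T = d * (T + 1) := by ring
    rw [heq] at this
    exact ⟨_, this⟩
end helpers4

/-- A `d`-degenerate graph on `n ≥ 2` vertices has a partition `S₁, …, S_k`
into stable sets with `k ≤ d·log₂ n` such that every vertex of `S_i` has degree
at most `4d` in the subgraph induced on `S_i ∪ ⋯ ∪ S_k`. -/

theorem stmt7 [Finite V] (G : SimpleGraph V) (d : ℕ) (h : DegenerateLE G d)
    (hn : 2 ≤ Nat.card V) :
    ∃ (k : ℕ) (S : Fin k → Set V),
      k ≤ d * Nat.log 2 (Nat.card V) ∧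
      (∀ i j, i ≠ j → Disjoint (S i) (S j)) ∧
      (⋃ i, S i) = Set.univ ∧
      (∀ i, StableSet G (S i)) ∧
      ∀ i, ∀ x ∈ S i,
        ({u | ∃ j, i ≤ j ∧ u ∈ S j} ∩ G.neighborSet x).ncard ≤ 4 * d := by
  classical
  set n := Nat.card V with hndef
  have hne : (Set.univ : Set V).Nonempty := by
    have : Nonempty V := Nat.card_pos_iff.mp (by omega) |>.1
    exact Set.univ_nonempty
  obtain ⟨x₀, _, hx₀⟩ := h Set.univ hne
  have hd1 : 1 ≤ d := by omega
  set T := Nat.log 2 n with hTdef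
  have hT1 : 1 ≤ T := Nat.log_pos (by omega) hn
  have hnlt : n < 2 ^ (T + 1) := Nat.lt_pow_succ_log_self (by omega) n
  set L := {x ∈ (Set.univ : Set V) | ((Set.univ : Set V) ∩ G.neighborSet x).ncard ≤ 4*d}
    with hLdef
  have hW' : ((Set.univ : Set V) \ L).ncard + 2 ≤ 2 ^ T := by
    have hp : 2 ^ (T+1) = 2 * 2 ^ T := by ring
    have hp2 : 2 ≤ 2 ^ T := by
      calc 2 = 2 ^ 1 := by norm_num
        _ ≤ 2 ^ T := Nat.pow_le_pow_right (by omega) hT1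
    rcases roundL h Set.univ with hemp | hineq
    · rw [← hLdef] at hemp
      rw [hemp, Set.ncard_empty]
      omega
    · rw [← hLdef, Set.ncard_univ] at hineq
      omega
  obtain ⟨S', hS'⟩ := build h (T - 1) _
    (by rw [show T - 1 + 1 = T by omega]; exact hW')
  obtain ⟨f, hf0, hfd, hfU, hfs⟩ := colorize h L.ncard L le_rfl
  obtain ⟨hS0, hSd, hSU, hSs, hSdeg⟩ :=
    combine (Set.subset_univ L) (fun x hx => hx.2) hf0 hfd hfU hfs hS'
  set S : ℕ → Set V := fun i => if i < d then f i else S' (i - d) with hSdef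
  have hc : d + d * (T - 1) = d * T := by
    have hTT : T - 1 + 1 = T := by omega
    conv_rhs => rw [← hTT]
    ring
  refine ⟨d * T, fun i => S i.1, le_rfl, ?_, ?_, ?_, ?_⟩
  · intro i j hij
    exact hSd i.1 j.1 (fun hv => hij (Fin.ext hv))
  · apply Set.eq_of_subset_of_subset
    · exact Set.subset_univ _
    · intro u _
      have : u ∈ ⋃ i, S i := hSU ▸ Set.mem_univ u
      obtain ⟨j, hj⟩ := Set.mem_iUnion.mp this
      have hjk : j < d * T := by
        by_contra hcon
        rw [hS0 j (by omega)] at hj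
        exact hj
      exact Set.mem_iUnion.mpr ⟨⟨j, hjk⟩, hj⟩
  · intro i
    exact hSs i.1
  · intro i x hx
    have hsub : {u | ∃ j : Fin (d * T), i ≤ j ∧ u ∈ S j.1} ∩ G.neighborSet x
        ⊆ {u | ∃ j : ℕ, i.1 ≤ j ∧ u ∈ S j} ∩ G.neighborSet x := by
      rintro u ⟨⟨j, hij, hj⟩, hN⟩
      exact ⟨⟨j.1, Fin.le_def.mp hij, hj⟩, hN⟩
    exact le_trans (Set.ncard_le_ncard hsub (Set.toFinite _)) (hSdeg i.1 x hx)
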